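/- Let N be a matroid on a finite ground set E of size m with rank function r, and let z : E → [0,1] satisfy ∑_{e∈S} z_e ≤ r(S)/2 for every S ⊆ E. Let F be a random subset of E obtained by including each element e independently with probability z_e. Then for every natural number t, the probability that F cannot be covered by t independent sets of N (i.e. that there do not exist independent sets I_1, …, I_t of N with F ⊆ I_1 ∪ ⋯ ∪ I_t) is at most m·2^{−t}. -/

import Mathlib

open scoped BigOperators Classical

/-- The rank function of a matroid: `mrank M S` is the maximum cardinality of an
independent subset of `S`. -/
noncomputable def mrank {α : Type*} (M : Matroid α) (S : Set α) : ℕ :=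
  sSup {n : ℕ | ∃ I : Finset α, ↑I ⊆ S ∧ M.Indep ↑I ∧ I.card = n}

section RankLemmas

variable {α : Type*} {N : Matroid α}

private def rset (N : Matroid α) (S : Finset α) : Set ℕ :=
  {n : ℕ | ∃ I : Finset α, ↑I ⊆ (↑S : Set α) ∧ N.Indep ↑I ∧ I.card = n}

lemma rset_bdd (S : Finset α) : BddAbove (rset N S) := by
  refine ⟨S.card, fun n hn => ?_⟩
  obtain ⟨I, hIS, -, rfl⟩ := hn
  exact Finset.card_le_card (by exact_mod_cast hIS)

lemma rset_nonempty (S : Finset α) : (rset N S).Nonempty :=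
  ⟨0, ⟨∅, by simp, by simp, by simp⟩⟩

lemma mrank_eq_sSup (S : Finset α) : mrank N ↑S = sSup (rset N S) := rfl

/-- there is a "basis": an independent subset of `S` of size `mrank N S`. -/
lemma exists_basis (S : Finset α) :
    ∃ I : Finset α, I ⊆ S ∧ N.Indep ↑I ∧ I.card = mrank N ↑S := by
  have h := Nat.sSup_mem (rset_nonempty (N := N) S) (rset_bdd S)
  obtain ⟨I, hIS, hI, hc⟩ := h
  exact ⟨I, by exact_mod_cast hIS, hI, hc⟩

lemma card_le_mrank {I S : Finset α} (hIS : I ⊆ S) (hI : N.Indep ↑I) :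
    I.card ≤ mrank N ↑S :=
  le_csSup (rset_bdd S) ⟨I, by exact_mod_cast hIS, hI, rfl⟩

lemma mrank_le_card (S : Finset α) : mrank N ↑S ≤ S.card := by
  obtain ⟨I, hIS, -, hc⟩ := exists_basis (N := N) S
  exact hc ▸ Finset.card_le_card hIS

lemma mrank_mono {S T : Finset α} (hST : S ⊆ T) : mrank N ↑S ≤ mrank N ↑T := by
  obtain ⟨I, hIS, hI, hc⟩ := exists_basis (N := N) S
  exact hc ▸ card_le_mrank (hIS.trans hST) hI

lemma mrank_empty : mrank N (↑(∅ : Finset α)) = 0 := by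
  have := mrank_le_card (N := N) (∅ : Finset α)
  simpa using this

/-- augment an independent subset that is not yet of full rank -/
lemma exists_augment {I S : Finset α} (hIS : I ⊆ S) (hI : N.Indep ↑I)
    (hlt : I.card < mrank N ↑S) :
    ∃ a ∈ S, a ∉ I ∧ N.Indep ↑(insert a I) := by
  obtain ⟨J, hJS, hJ, hc⟩ := exists_basis (N := N) S
  have hcard : (↑I : Set α).encard < (↑J : Set α).encard := by
    rw [Set.encard_coe_eq_coe_finsetCard, Set.encard_coe_eq_coe_finsetCard]
    exact_mod_cast hc ▸ hlt
  obtain ⟨e, he, hind⟩ := hI.augment hJ hcard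
  refine ⟨e, hJS (by exact_mod_cast he.1), by exact_mod_cast he.2, ?_⟩
  simpa using hind

/-- extend an independent subset to a basis of `S` containing it -/
lemma exists_basis_superset {I S : Finset α} (hIS : I ⊆ S) (hI : N.Indep ↑I) :
    ∃ J : Finset α, I ⊆ J ∧ J ⊆ S ∧ N.Indep ↑J ∧ J.card = mrank N ↑S := by
  by_cases h : I.card = mrank N ↑S
  · exact ⟨I, subset_rfl, hIS, hI, h⟩
  · have hlt : I.card < mrank N ↑S := lt_of_le_of_ne (card_le_mrank hIS hI) h
    obtain ⟨a, haS, haI, hind⟩ := exists_augment hIS hI hlt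
    have hms : insert a I ⊆ S := Finset.insert_subset haS hIS
    have : mrank N ↑S - (insert a I).card < mrank N ↑S - I.card := by
      rw [Finset.card_insert_of_notMem haI]
      omega
    obtain ⟨J, hIJ, hJS, hJ, hc⟩ := exists_basis_superset hms hind
    exact ⟨J, (Finset.subset_insert a I).trans hIJ, hJS, hJ, hc⟩
termination_by mrank N ↑S - I.card

lemma mrank_insert_le (a : α) (S : Finset α) :
    mrank N ↑(insert a S) ≤ mrank N ↑S + 1 := by
  obtain ⟨J, hJS, hJ, hc⟩ := exists_basis (N := N) (insert a S)
  have h1 : J.erase a ⊆ S := by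
    intro x hx
    have := hJS (Finset.mem_of_mem_erase hx)
    rcases Finset.mem_insert.mp this with h | h
    · exact absurd h (Finset.ne_of_mem_erase hx)
    · exact h
  have h2 : N.Indep ↑(J.erase a) := hJ.subset (by exact_mod_cast Finset.erase_subset a J)
  have := card_le_mrank h1 h2
  have := Finset.pred_card_le_card_erase (a := a) (s := J)
  omega

lemma mrank_submod (S T : Finset α) :
    mrank N ↑(S ∪ T) + mrank N ↑(S ∩ T) ≤ mrank N ↑S + mrank N ↑T := by
  obtain ⟨I, hIST, hI, hcI⟩ := exists_basis (N := N) (S ∩ T)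
  obtain ⟨J, hIJ, hJS, hJ, hcJ⟩ :=
    exists_basis_superset (hIST.trans (Finset.inter_subset_union)) hI
  have hJa : (J ∩ S).card ≤ mrank N ↑S := card_le_mrank (Finset.inter_subset_right) (hJ.subset (by exact_mod_cast Finset.inter_subset_left))
  have hJb : (J ∩ T).card ≤ mrank N ↑T := card_le_mrank (Finset.inter_subset_right) (hJ.subset (by exact_mod_cast Finset.inter_subset_left))
  have hint : (J ∩ (S ∩ T)).card = mrank N ↑(S ∩ T) := by
    have h1 : I ⊆ J ∩ (S ∩ T) := Finset.subset_inter hIJ hIST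
    have h2 : (J ∩ (S ∩ T)).card ≤ mrank N ↑(S ∩ T) :=
      card_le_mrank (Finset.inter_subset_right) (hJ.subset (by exact_mod_cast Finset.inter_subset_left))
    have := Finset.card_le_card h1
    omega
  have hun : J ∩ S ∪ J ∩ T = J := by
    rw [← Finset.inter_union_distrib_left]
    exact Finset.inter_eq_left.mpr hJS
  have hin : (J ∩ S) ∩ (J ∩ T) = J ∩ (S ∩ T) := by
    ext x; simp [Finset.mem_inter]; tauto
  have hcard := Finset.card_inter_add_card_union (J ∩ S) (J ∩ T)
  rw [hun, hin] at hcard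
  omega

lemma indep_of_mrank_eq_card {I : Finset α} (h : mrank N ↑I = I.card) : N.Indep ↑I := by
  obtain ⟨J, hJI, hJ, hc⟩ := exists_basis (N := N) I
  have : J = I := Finset.eq_of_subset_of_card_le hJI (by omega)
  exact this ▸ hJ

lemma mrank_eq_card_of_indep {I : Finset α} (h : N.Indep ↑I) : mrank N ↑I = I.card :=
  le_antisymm (mrank_le_card I) (card_le_mrank subset_rfl h)

lemma mrank_insert_dichotomy (a : α) (S : Finset α) :
    mrank N ↑(insert a S) = mrank N ↑S ∨ mrank N ↑(insert a S) = mrank N ↑S + 1 := by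
  have h1 := mrank_insert_le (N := N) a S
  have h2 := mrank_mono (N := N) (Finset.subset_insert a S)
  omega

/-- transfer of spanning between sets of equal rank -/
lemma span_transfer {A B : Finset α} (hAB : A ⊆ B) (hr : mrank N ↑A = mrank N ↑B) (a : α) :
    mrank N ↑(insert a A) = mrank N ↑A ↔ mrank N ↑(insert a B) = mrank N ↑B := by
  constructor
  · intro h
    have hsub := mrank_submod (N := N) (insert a A) B
    have h1 : insert a A ∪ B = insert a B := by
      rw [Finset.insert_union, Finset.union_eq_right.mpr hAB]
    have h2 : A ⊆ insert a A ∩ B := Finset.subset_inter (Finset.subset_insert a A) hAB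
    have h3 := mrank_mono (N := N) h2
    rw [h1] at hsub
    have h4 := mrank_mono (N := N) (Finset.subset_insert a B)
    omega
  · intro h
    have h5 := mrank_mono (N := N) (Finset.insert_subset_insert a hAB)
    have h6 := mrank_mono (N := N) (Finset.subset_insert a A)
    omega

end RankLemmas


section Greedy

variable {α : Type*} [Fintype α] (N : Matroid α)

noncomputable def indx (a : α) : ℕ := ((Fintype.equivFin α) a : ℕ)

lemma indx_inj {a b : α} (h : indx a = indx b) : a = b := by
  have := (Fintype.equivFin α).injective (Fin.ext h)
  exact this

lemma indx_lt_card (a : α) : indx a < Fintype.card α := ((Fintype.equivFin α) a).2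

noncomputable def predF (S : Finset α) (a : α) : Finset α := S.filter (fun b => indx b < indx a)

def Sp (S : Finset α) (a : α) : Prop := mrank N ↑(insert a S) = mrank N ↑S

noncomputable def acc (F : Finset α) : ℕ → Finset α
  | 0 => ∅
  | (k+1) =>
    let A := acc F k
    if h : ∃ a, a ∈ F ∧ indx a = k then
      if Sp N A h.choose then A else insert h.choose A
    else A

noncomputable def gB (F : Finset α) : Finset α := acc N F (Fintype.card α)

lemma acc_subset_filter (F : Finset α) : ∀ k, acc N F k ⊆ F.filter (fun b => indx b < k)
  | 0 => by simp [acc]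
  | (k+1) => by
    have IH := acc_subset_filter F k
    have hmono : F.filter (fun b => indx b < k) ⊆ F.filter (fun b => indx b < k + 1) := by
      intro b hb
      rw [Finset.mem_filter] at hb ⊢
      exact ⟨hb.1, by omega⟩
    simp only [acc]
    split
    · rename_i h
      split
      · exact IH.trans hmono
      · intro x hx
        rcases Finset.mem_insert.mp hx with rfl | hx
        · exact Finset.mem_filter.mpr ⟨h.choose_spec.1, by rw [h.choose_spec.2]; omega⟩
        · exact hmono (IH hx)
    · exact IH.trans hmono

lemma acc_mono_succ (F : Finset α) (k : ℕ) : acc N F k ⊆ acc N F (k+1) := by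
  simp only [acc]
  split
  · split
    · exact subset_rfl
    · exact Finset.subset_insert _ _
  · exact subset_rfl

lemma acc_filter_eq (F : Finset α) : ∀ m k, k ≤ m →
    (acc N F m).filter (fun b => indx b < k) = acc N F k := by
  intro m
  induction m with
  | zero => intro k hk; interval_cases k; simp [acc]
  | succ m IH =>
    intro k hk
    rcases Nat.eq_or_lt_of_le hk with rfl | hlt
    · -- k = m+1 : filter is everything
      apply Finset.filter_true_of_mem
      intro x hx
      have := acc_subset_filter N F (m+1) hx
      exact (Finset.mem_filter.mp this).2
    · have hk' : k ≤ m := by omega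
      rw [← IH k hk']
      -- show filtering acc (m+1) at k = filtering acc m at k
      simp only [acc]
      split
      · rename_i h
        split
        · rfl
        · rw [Finset.filter_insert]
          rw [if_neg]
          rw [h.choose_spec.2]
          omega
      · rfl

lemma gB_filter_eq (F : Finset α) (k : ℕ) (hk : k ≤ Fintype.card α) :
    (gB N F).filter (fun b => indx b < k) = acc N F k :=
  acc_filter_eq N F _ k hk

lemma acc_subset (F : Finset α) (k : ℕ) : acc N F k ⊆ F :=
  (acc_subset_filter N F k).trans (Finset.filter_subset _ _)

lemma gB_subset (F : Finset α) : gB N F ⊆ F := acc_subset N F _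

lemma indx_not_mem_acc (F : Finset α) (a : α) (k : ℕ) (h : k ≤ indx a) : a ∉ acc N F k := by
  intro hmem
  have := acc_subset_filter N F k hmem
  have := (Finset.mem_filter.mp this).2
  omega

lemma acc_step_mem (F : Finset α) (a : α) (ha : a ∈ F) :
    acc N F (indx a + 1) =
      if Sp N (acc N F (indx a)) a then acc N F (indx a)
      else insert a (acc N F (indx a)) := by
  have h : ∃ x, x ∈ F ∧ indx x = indx a := ⟨a, ha, rfl⟩
  have hch : h.choose = a := indx_inj h.choose_spec.2
  simp only [acc, dif_pos h, hch]

lemma mem_acc_stable (F : Finset α) (a : α) : ∀ m, indx a + 1 ≤ m →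
    (a ∈ acc N F m ↔ a ∈ acc N F (indx a + 1)) := by
  intro m
  induction m with
  | zero => omega
  | succ m IH =>
    intro hm
    rcases Nat.eq_or_lt_of_le hm with h | hlt
    · rw [← h]
    · have hm' : indx a + 1 ≤ m := by omega
      rw [← IH hm']
      simp only [acc]
      split
      · rename_i h
        have hne : h.choose ≠ a := by
          intro heq
          have := h.choose_spec.2
          rw [heq] at this
          omega
        split
        · rfl
        · simp only [Finset.mem_insert]
          constructor
          · rintro (h1 | h1)
            · exact absurd h1.symm hne
            · exact h1
          · intro h1
            exact Or.inr h1
      · rfl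

lemma mem_gB_iff (F : Finset α) (a : α) (ha : a ∈ F) :
    a ∈ gB N F ↔ ¬ Sp N (acc N F (indx a)) a := by
  unfold gB
  rw [mem_acc_stable N F a (Fintype.card α) (indx_lt_card a)]
  rw [acc_step_mem N F a ha]
  split
  · rename_i h
    simp [indx_not_mem_acc N F a (indx a) le_rfl, h]
  · rename_i h
    simp [h]

end Greedy

section Greedy2

variable {α : Type*} [Fintype α] (N : Matroid α)

lemma acc_rank_eq (F : Finset α) : ∀ k,
    mrank N ↑(acc N F k) = mrank N ↑(F.filter (fun b => indx b < k))
  | 0 => by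
    have h1 : acc N F 0 = ∅ := rfl
    have h2 : F.filter (fun b => indx b < 0) = ∅ := by
      apply Finset.filter_false_of_mem; intro x _; omega
    rw [h1, h2]
  | (k+1) => by
    have IH := acc_rank_eq F k
    by_cases h : ∃ a, a ∈ F ∧ indx a = k
    · obtain ⟨a, haF, hak⟩ := h
      have hstep : acc N F (k+1) =
          if Sp N (acc N F k) a then acc N F k else insert a (acc N F k) := by
        have := acc_step_mem N F a haF
        rw [hak] at this
        exact this
      have hfilter : F.filter (fun b => indx b < k + 1) =
          insert a (F.filter (fun b => indx b < k)) := by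
        ext x
        simp only [Finset.mem_filter, Finset.mem_insert]
        constructor
        · rintro ⟨hxF, hxk⟩
          by_cases hxa : indx x = k
          · exact Or.inl (indx_inj (hak ▸ hxa))
          · exact Or.inr ⟨hxF, by omega⟩
        · rintro (rfl | ⟨hxF, hxk⟩)
          · exact ⟨haF, by omega⟩
          · exact ⟨hxF, by omega⟩
      have htrans := span_transfer (N := N)
        (acc_subset_filter N F k) IH a
      rw [hstep, hfilter]
      by_cases hsp : Sp N (acc N F k) a
      · rw [if_pos hsp]
        have h2 : mrank N ↑(insert a (F.filter (fun b => indx b < k))) =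
            mrank N ↑(F.filter (fun b => indx b < k)) := htrans.mp hsp
        rw [h2, IH]
      · rw [if_neg hsp]
        unfold Sp at hsp htrans
        have h3 : ¬ (mrank N ↑(insert a (F.filter (fun b => indx b < k))) =
            mrank N ↑(F.filter (fun b => indx b < k))) := fun hh => hsp (htrans.mpr hh)
        have d1 := mrank_insert_dichotomy (N := N) a (acc N F k)
        have d2 := mrank_insert_dichotomy (N := N) a (F.filter (fun b => indx b < k))
        rcases d1 with d1 | d1
        · exact absurd d1 hsp
        · rcases d2 with d2 | d2
          · exact absurd d2 h3
          · rw [d1, d2, IH]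
    · have hstep : acc N F (k+1) = acc N F k := by
        simp only [acc, dif_neg h]
      have hfilter : F.filter (fun b => indx b < k + 1) = F.filter (fun b => indx b < k) := by
        apply Finset.filter_congr
        intro x hxF
        constructor
        · intro hx
          rcases Nat.lt_succ_iff_lt_or_eq.mp hx with h1 | h1
          · exact h1
          · exact absurd ⟨x, hxF, h1⟩ h
        · omega
      rw [hstep, hfilter, IH]

lemma acc_card_eq_rank (F : Finset α) : ∀ k, (acc N F k).card = mrank N ↑(acc N F k)
  | 0 => by
    have h1 : acc N F 0 = ∅ := rfl
    rw [h1]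
    simpa using (mrank_empty (N := N)).symm
  | (k+1) => by
    have IH := acc_card_eq_rank F k
    by_cases h : ∃ a, a ∈ F ∧ indx a = k
    · obtain ⟨a, haF, hak⟩ := h
      have hstep : acc N F (k+1) =
          if Sp N (acc N F k) a then acc N F k else insert a (acc N F k) := by
        have := acc_step_mem N F a haF
        rw [hak] at this
        exact this
      rw [hstep]
      by_cases hsp : Sp N (acc N F k) a
      · rw [if_pos hsp]; exact IH
      · rw [if_neg hsp]
        have hnotmem : a ∉ acc N F k := indx_not_mem_acc N F a k (le_of_eq hak.symm)
        rw [Finset.card_insert_of_notMem hnotmem]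
        have d1 := mrank_insert_dichotomy (N := N) a (acc N F k)
        unfold Sp at hsp
        rcases d1 with d1 | d1
        · exact absurd d1 hsp
        · rw [d1, IH]
    · have hstep : acc N F (k+1) = acc N F k := by
        simp only [acc, dif_neg h]
      rw [hstep]; exact IH

lemma filter_lt_card_eq (F : Finset α) :
    F.filter (fun b => indx b < Fintype.card α) = F := by
  apply Finset.filter_true_of_mem
  intro x _
  exact indx_lt_card x

lemma gB_card_eq_rank (F : Finset α) : (gB N F).card = mrank N ↑F := by
  unfold gB
  rw [acc_card_eq_rank, acc_rank_eq, filter_lt_card_eq]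

lemma gB_indep (F : Finset α) : N.Indep ↑(gB N F) := by
  apply indep_of_mrank_eq_card
  rw [gB_card_eq_rank]
  unfold gB
  rw [acc_rank_eq, filter_lt_card_eq]

lemma predF_gB_eq_acc (F : Finset α) (a : α) :
    predF (gB N F) a = acc N F (indx a) := by
  unfold predF
  exact gB_filter_eq N F (indx a) (le_of_lt (indx_lt_card a))

/-- the "rejected" characterization: for `a ∈ F`,
`a ∉ gB F` iff `a` is spanned by the earlier part of `F`. -/
lemma sp_acc_iff_sp_predF (F : Finset α) (a : α) :
    Sp N (acc N F (indx a)) a ↔ Sp N (predF F a) a := by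
  unfold Sp
  exact span_transfer (N := N) (acc_subset_filter N F (indx a)) (acc_rank_eq N F (indx a)) a

lemma mem_gB_iff' (F : Finset α) (a : α) (ha : a ∈ F) :
    a ∈ gB N F ↔ ¬ Sp N (predF F a) a := by
  rw [mem_gB_iff N F a ha, sp_acc_iff_sp_predF]

def Good (B : Finset α) : Prop := ∀ a ∈ B, ¬ Sp N (predF B a) a

noncomputable def VBs (V B : Finset α) : Finset α :=
  V.filter (fun a => a ∉ B ∧ Sp N (predF B a) a)

lemma good_gB (F : Finset α) : Good N (gB N F) := by
  intro a haB
  have haF : a ∈ F := gB_subset N F haB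
  rw [predF_gB_eq_acc]
  exact (mem_gB_iff N F a haF).mp haB

lemma mem_VBs_iff_sp (V F : Finset α) (hFV : F ⊆ V) (f : α) (hfV : f ∈ V) :
    f ∈ VBs N V (gB N F) ↔ Sp N (predF F f) f := by
  unfold VBs
  rw [Finset.mem_filter]
  constructor
  · rintro ⟨-, -, hsp⟩
    rw [predF_gB_eq_acc] at hsp
    exact (sp_acc_iff_sp_predF N F f).mp hsp
  · intro hsp
    refine ⟨hfV, ?_, ?_⟩
    · intro hmem
      have haF : f ∈ F := gB_subset N F hmem
      exact ((mem_gB_iff' N F f haF).mp hmem) hsp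
    · rw [predF_gB_eq_acc]
      exact (sp_acc_iff_sp_predF N F f).mpr hsp

lemma sdiff_gB_subset_VBs (V F : Finset α) (hFV : F ⊆ V) :
    F \ gB N F ⊆ VBs N V (gB N F) := by
  intro f hf
  rw [Finset.mem_sdiff] at hf
  rw [mem_VBs_iff_sp N V F hFV f (hFV hf.1)]
  by_contra hsp
  exact hf.2 ((mem_gB_iff' N F f hf.1).mpr hsp)

/-- greedy determinism: the fiber of `B` consists of `B ∪ X` for `X ⊆ VBs V B`. -/
lemma gB_union_eq (B X : Finset α) (hGood : Good N B)
    (hX : ∀ a ∈ X, a ∉ B ∧ Sp N (predF B a) a) : gB N (B ∪ X) = B := by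
  have key : ∀ k, acc N (B ∪ X) k = B.filter (fun b => indx b < k) := by
    intro k
    induction k with
    | zero => simp [acc]
    | succ k IH =>
      by_cases h : ∃ a, a ∈ B ∪ X ∧ indx a = k
      · obtain ⟨a, haBX, hak⟩ := h
        have hstep : acc N (B ∪ X) (k+1) =
            if Sp N (acc N (B ∪ X) k) a then acc N (B ∪ X) k
            else insert a (acc N (B ∪ X) k) := by
          have := acc_step_mem N (B ∪ X) a haBX
          rw [hak] at this
          exact this
        have hpredeq : predF B a = B.filter (fun b => indx b < k) := by
          unfold predF; rw [hak]
        rcases Finset.mem_union.mp haBX with haB | haX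
        · have hnsp : ¬ Sp N (acc N (B ∪ X) k) a := by
            rw [IH, ← hpredeq]
            exact hGood a haB
          rw [hstep, if_neg hnsp, IH]
          ext x
          simp only [Finset.mem_insert, Finset.mem_filter]
          constructor
          · rintro (rfl | ⟨hxB, hxk⟩)
            · exact ⟨haB, by omega⟩
            · exact ⟨hxB, by omega⟩
          · rintro ⟨hxB, hxk⟩
            by_cases hxa : indx x = k
            · exact Or.inl (indx_inj (hak ▸ hxa))
            · exact Or.inr ⟨hxB, by omega⟩
        · have hsp : Sp N (acc N (B ∪ X) k) a := by
            rw [IH, ← hpredeq]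
            exact (hX a haX).2
          rw [hstep, if_pos hsp, IH]
          apply Finset.filter_congr
          intro x hxB
          constructor
          · omega
          · intro hx
            rcases Nat.lt_succ_iff_lt_or_eq.mp hx with h1 | h1
            · exact h1
            · exfalso
              have : x = a := indx_inj (hak ▸ h1)
              exact (hX a haX).1 (this ▸ hxB)
      · have hstep : acc N (B ∪ X) (k+1) = acc N (B ∪ X) k := by
          simp only [acc, dif_neg h]
        rw [hstep, IH]
        apply Finset.filter_congr
        intro x hxB
        constructor
        · omega
        · intro hx
          rcases Nat.lt_succ_iff_lt_or_eq.mp hx with h1 | h1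
          · exact h1
          · exact absurd ⟨x, Finset.mem_union_left X hxB, h1⟩ h
  unfold gB
  rw [key, filter_lt_card_eq]

end Greedy2

section Prob

variable {α : Type*}

noncomputable def wgt (z : α → ℝ) (V F : Finset α) : ℝ :=
  (∏ a ∈ F, z a) * (∏ a ∈ V \ F, (1 - z a))

noncomputable def Pr (z : α → ℝ) (V : Finset α) (Q : Finset α → ℝ) : ℝ :=
  ∑ F ∈ V.powerset, wgt z V F * Q F

lemma sum_powerset_insert {β : Type*} [AddCommMonoid β] {a : α} {W : Finset α} (ha : a ∉ W)
    (f : Finset α → β) :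
    ∑ F ∈ (insert a W).powerset, f F =
      ∑ X ∈ W.powerset, f X + ∑ X ∈ W.powerset, f (insert a X) := by
  rw [Finset.powerset_insert, Finset.sum_union, Finset.sum_image]
  · intro X hX Y hY hXY
    rw [Finset.mem_coe, Finset.mem_powerset] at hX hY
    have h1 : a ∉ X := fun h => ha (hX h)
    have h2 : a ∉ Y := fun h => ha (hY h)
    have := congrArg (fun S => Finset.erase S a) hXY
    simpa [Finset.erase_insert h1, Finset.erase_insert h2] using this
  · rw [Finset.disjoint_left]
    intro F hF hF'
    rw [Finset.mem_powerset] at hF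
    obtain ⟨X, hX, rfl⟩ := Finset.mem_image.mp hF'
    exact ha (hF (Finset.mem_insert_self a X))

lemma wgt_insert_notmem {z : α → ℝ} {a : α} {W F : Finset α} (ha : a ∉ W) (hF : F ⊆ W) :
    wgt z (insert a W) F = (1 - z a) * wgt z W F := by
  unfold wgt
  have h1 : insert a W \ F = insert a (W \ F) := by
    ext x
    simp only [Finset.mem_sdiff, Finset.mem_insert]
    constructor
    · rintro ⟨rfl | hx, hx2⟩
      · exact Or.inl rfl
      · exact Or.inr ⟨hx, hx2⟩
    · rintro (rfl | ⟨hx, hx2⟩)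
      · exact ⟨Or.inl rfl, fun h => ha (hF h)⟩
      · exact ⟨Or.inr hx, hx2⟩
  have h2 : a ∉ W \ F := fun h => ha (Finset.mem_sdiff.mp h).1
  rw [h1, Finset.prod_insert h2]
  ring

lemma wgt_insert_mem {z : α → ℝ} {a : α} {W X : Finset α} (ha : a ∉ W) (hX : X ⊆ W) :
    wgt z (insert a W) (insert a X) = z a * wgt z W X := by
  unfold wgt
  have haX : a ∉ X := fun h => ha (hX h)
  have h1 : insert a W \ insert a X = W \ X := by
    ext x
    simp only [Finset.mem_sdiff, Finset.mem_insert]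
    constructor
    · rintro ⟨rfl | hx, hx2⟩
      · exact absurd (Or.inl rfl) hx2
      · exact ⟨hx, fun h => hx2 (Or.inr h)⟩
    · rintro ⟨hx, hx2⟩
      refine ⟨Or.inr hx, ?_⟩
      rintro (rfl | h)
      · exact ha hx
      · exact hx2 h
  rw [h1, Finset.prod_insert haX]
  ring

lemma Pr_insert {z : α → ℝ} {a : α} {W : Finset α} (ha : a ∉ W) (Q : Finset α → ℝ) :
    Pr z (insert a W) Q =
      z a * Pr z W (fun X => Q (insert a X)) + (1 - z a) * Pr z W Q := by
  unfold Pr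
  rw [sum_powerset_insert ha]
  rw [Finset.mul_sum, Finset.mul_sum]
  rw [add_comm]
  congr 1
  · apply Finset.sum_congr rfl
    intro X hX
    rw [Finset.mem_powerset] at hX
    rw [wgt_insert_mem ha hX]
    ring
  · apply Finset.sum_congr rfl
    intro X hX
    rw [Finset.mem_powerset] at hX
    rw [wgt_insert_notmem ha hX]
    ring

lemma Pr_pivot {z : α → ℝ} {a : α} {V : Finset α} (ha : a ∈ V) (Q : Finset α → ℝ) :
    Pr z V Q = z a * Pr z (V.erase a) (fun X => Q (insert a X))
      + (1 - z a) * Pr z (V.erase a) Q := by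
  conv_lhs => rw [← Finset.insert_erase ha]
  exact Pr_insert (Finset.notMem_erase a V) Q

lemma Pr_const (z : α → ℝ) (V : Finset α) (c : ℝ) : Pr z V (fun _ => c) = c := by
  induction V using Finset.induction_on with
  | empty => simp [Pr, wgt]
  | insert _ _ ha IH => rw [Pr_insert ha]; rw [IH]; ring

lemma Pr_congr {z : α → ℝ} {V : Finset α} {Q R : Finset α → ℝ}
    (h : ∀ F ⊆ V, Q F = R F) : Pr z V Q = Pr z V R := by
  unfold Pr
  apply Finset.sum_congr rfl
  intro F hF
  rw [h F (Finset.mem_powerset.mp hF)]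

lemma wgt_nonneg {z : α → ℝ} (hz : ∀ e, 0 ≤ z e ∧ z e ≤ 1) (V F : Finset α) :
    0 ≤ wgt z V F := by
  apply mul_nonneg
  · exact Finset.prod_nonneg fun a _ => (hz a).1
  · exact Finset.prod_nonneg fun a _ => by linarith [(hz a).2]

lemma Pr_mono {z : α → ℝ} (hz : ∀ e, 0 ≤ z e ∧ z e ≤ 1) {V : Finset α} {Q R : Finset α → ℝ}
    (h : ∀ F ⊆ V, Q F ≤ R F) : Pr z V Q ≤ Pr z V R := by
  apply Finset.sum_le_sum
  intro F hF
  exact mul_le_mul_of_nonneg_left (h F (Finset.mem_powerset.mp hF)) (wgt_nonneg hz V F)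

lemma Pr_add (z : α → ℝ) (V : Finset α) (Q R : Finset α → ℝ) :
    Pr z V (fun F => Q F + R F) = Pr z V Q + Pr z V R := by
  unfold Pr
  rw [← Finset.sum_add_distrib]
  apply Finset.sum_congr rfl
  intro F _
  ring

lemma Pr_smul (z : α → ℝ) (V : Finset α) (c : ℝ) (Q : Finset α → ℝ) :
    Pr z V (fun F => c * Q F) = c * Pr z V Q := by
  unfold Pr
  rw [Finset.mul_sum]
  apply Finset.sum_congr rfl
  intro F _
  ring

lemma Pr_sub (z : α → ℝ) (V : Finset α) (Q R : Finset α → ℝ) :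
    Pr z V (fun F => Q F - R F) = Pr z V Q - Pr z V R := by
  unfold Pr
  rw [← Finset.sum_sub_distrib]
  apply Finset.sum_congr rfl
  intro F _
  ring

lemma Pr_sum {ι : Type*} (z : α → ℝ) (V : Finset α) (I : Finset ι) (Q : ι → Finset α → ℝ) :
    Pr z V (fun F => ∑ i ∈ I, Q i F) = ∑ i ∈ I, Pr z V (Q i) := by
  unfold Pr
  rw [Finset.sum_comm]
  apply Finset.sum_congr rfl
  intro F _
  rw [Finset.mul_sum]

end Prob

section Fiber
variable {α : Type*} [Fintype α] (N : Matroid α)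

lemma mem_VBs_prop {V B : Finset α} {a : α} (h : a ∈ VBs N V B) :
    a ∉ B ∧ Sp N (predF B a) a := (Finset.mem_filter.mp h).2

lemma VBs_subset (V B : Finset α) : VBs N V B ⊆ V := Finset.filter_subset _ _

lemma disjoint_B_VBs (V B : Finset α) : Disjoint B (VBs N V B) := by
  rw [Finset.disjoint_right]
  intro a ha
  exact (mem_VBs_prop N ha).1

noncomputable def cB (z : α → ℝ) (V B : Finset α) : ℝ :=
  (∏ a ∈ B, z a) * (∏ a ∈ (V \ B) \ VBs N V B, (1 - z a))

lemma wgt_factor (z : α → ℝ) {V B X : Finset α} (hB : B ⊆ V) (hX : X ⊆ VBs N V B) :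
    wgt z V (B ∪ X) = cB N z V B * wgt z (VBs N V B) X := by
  unfold wgt cB
  have hdisjBX : Disjoint B X :=
    (disjoint_B_VBs N V B).mono_right hX
  have h1 : ∏ a ∈ B ∪ X, z a = (∏ a ∈ B, z a) * (∏ a ∈ X, z a) :=
    Finset.prod_union hdisjBX
  have h2 : V \ (B ∪ X) = ((V \ B) \ VBs N V B) ∪ (VBs N V B \ X) := by
    ext x
    simp only [Finset.mem_sdiff, Finset.mem_union]
    constructor
    · rintro ⟨hxV, hx⟩
      have hxB : x ∉ B := fun h => hx (Or.inl h)
      have hxX : x ∉ X := fun h => hx (Or.inr h)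
      by_cases hxVB : x ∈ VBs N V B
      · exact Or.inr ⟨hxVB, hxX⟩
      · exact Or.inl ⟨⟨hxV, hxB⟩, hxVB⟩
    · rintro (⟨⟨hxV, hxB⟩, hxVB⟩ | ⟨hxVB, hxX⟩)
      · exact ⟨hxV, fun h => h.elim (fun h => hxB h) (fun h => hxVB (hX h))⟩
      · exact ⟨VBs_subset N V B hxVB, fun h => h.elim
          (fun h => (mem_VBs_prop N hxVB).1 h) (fun h => hxX h)⟩
  have hdisj2 : Disjoint ((V \ B) \ VBs N V B) (VBs N V B \ X) := by
    rw [Finset.disjoint_left]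
    intro x hx hx'
    exact (Finset.mem_sdiff.mp hx).2 (Finset.mem_sdiff.mp hx').1
  rw [h1, h2, Finset.prod_union hdisj2]
  ring

lemma Pr_fiber (z : α → ℝ) (V : Finset α) (Q : Finset α → ℝ) :
    Pr z V Q = ∑ B ∈ V.powerset,
      (if Good N B then cB N z V B * Pr z (VBs N V B) (fun X => Q (B ∪ X)) else 0) := by
  have hmaps : ∀ F ∈ V.powerset, gB N F ∈ V.powerset := by
    intro F hF
    rw [Finset.mem_powerset] at hF ⊢
    exact (gB_subset N F).trans hF
  unfold Pr
  rw [← Finset.sum_fiberwise_of_maps_to hmaps (fun F => wgt z V F * Q F)]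
  apply Finset.sum_congr rfl
  intro B hB
  rw [Finset.mem_powerset] at hB
  by_cases hGood : Good N B
  · rw [if_pos hGood]
    rw [Finset.mul_sum]
    apply Finset.sum_nbij' (fun F => F \ B) (fun X => B ∪ X)
    · intro F hF
      simp only [Finset.mem_filter, Finset.mem_powerset] at hF
      rw [Finset.mem_powerset]
      exact hF.2 ▸ sdiff_gB_subset_VBs N V F hF.1
    · intro X hX
      rw [Finset.mem_powerset] at hX
      simp only [Finset.mem_filter, Finset.mem_powerset]
      constructor
      · exact Finset.union_subset hB ((hX.trans (VBs_subset N V B)))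
      · exact gB_union_eq N B X hGood (fun a ha => mem_VBs_prop N (hX ha))
    · intro F hF
      simp only [Finset.mem_filter, Finset.mem_powerset] at hF
      have hBF : B ⊆ F := hF.2 ▸ gB_subset N F
      exact Finset.union_sdiff_of_subset hBF
    · intro X hX
      rw [Finset.mem_powerset] at hX
      exact Finset.union_sdiff_cancel_left ((disjoint_B_VBs N V B).mono_right hX)
    · intro F hF
      simp only [Finset.mem_filter, Finset.mem_powerset] at hF
      have hBF : B ⊆ F := hF.2 ▸ gB_subset N F
      have hXV : F \ B ⊆ VBs N V B := hF.2 ▸ sdiff_gB_subset_VBs N V F hF.1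
      have hUF : B ∪ F \ B = F := Finset.union_sdiff_of_subset hBF
      have h2 : wgt z V F = cB N z V B * wgt z (VBs N V B) (F \ B) := by
        conv_lhs => rw [← hUF]
        exact wgt_factor N z hB hXV
      show wgt z V F * Q F =
        cB N z V B * (wgt z (VBs N V B) (F \ B) * Q (B ∪ F \ B))
      rw [hUF, h2]
      ring
  · rw [if_neg hGood]
    apply Finset.sum_eq_zero
    intro F hF
    simp only [Finset.mem_filter, Finset.mem_powerset] at hF
    exact absurd (hF.2 ▸ good_gB N F) hGood

end Fiber

section AGG
variable {α : Type*}

structure RkAx (R : Finset α → ℝ) : Prop where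
  empty : R ∅ = 0
  mono : ∀ {S T : Finset α}, S ⊆ T → R S ≤ R T
  submod : ∀ S T : Finset α, R (S ∪ T) + R (S ∩ T) ≤ R S + R T
  dich : ∀ (a : α) (S : Finset α), R (insert a S) = R S ∨ R (insert a S) = R S + 1

lemma RkAx.loop_insert {R : Finset α → ℝ} (hR : RkAx R) {f : α} (hf : R {f} = 0)
    {S : Finset α} (hfS : f ∉ S) : R (insert f S) = R S := by
  have hsub := hR.submod {f} S
  have h1 : {f} ∪ S = insert f S := by rw [Finset.insert_eq]
  have h2 : {f} ∩ S = ∅ := by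
    rw [Finset.singleton_inter_of_notMem hfS]
  rw [h1, h2, hR.empty, hf] at hsub
  have h3 := hR.mono (Finset.subset_insert f S)
  linarith

lemma RkAx.contract {R : Finset α → ℝ} (hR : RkAx R) {f : α} (hf : R {f} = 1) :
    RkAx (fun S => R (insert f S) - 1) := by
  constructor
  · show R (insert f ∅) - 1 = 0
    rw [show insert f (∅ : Finset α) = {f} from rfl, hf]
    ring
  · intro S T hST
    have := hR.mono (Finset.insert_subset_insert f hST)
    linarith
  · intro S T
    have hsub := hR.submod (insert f S) (insert f T)
    have h1 : insert f S ∪ insert f T = insert f (S ∪ T) := by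
      ext x; simp only [Finset.mem_union, Finset.mem_insert]; tauto
    have h2 : insert f S ∩ insert f T = insert f (S ∩ T) := by
      ext x; simp only [Finset.mem_inter, Finset.mem_insert]; tauto
    rw [h1, h2] at hsub
    linarith
  · intro a S
    have := hR.dich a (insert f S)
    rw [Finset.insert_comm] at this
    rcases this with h | h
    · left; rw [h]
    · right; rw [h]; ring

lemma RkAx.singleton_dich {R : Finset α → ℝ} (hR : RkAx R) (f : α) :
    R {f} = 0 ∨ R {f} = 1 := by
  have := hR.dich f ∅
  rw [hR.empty] at this
  simpa using this

lemma AGG (z : α → ℝ) (hz : ∀ e, 0 ≤ z e ∧ z e ≤ 1) :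
    ∀ (n : ℕ) (V : Finset α), V.card = n → ∀ (R : Finset α → ℝ), RkAx R →
    ∀ (c : ℝ), 0 ≤ c → (∀ S ⊆ V, 2 * ∑ a ∈ S, z a ≤ R S + c) →
    -c ≤ Pr z V (fun F => 2 * R F - (F.card : ℝ)) := by
  intro n
  induction n with
  | zero =>
    intro V hV R hR c hc _
    rw [Finset.card_eq_zero] at hV
    subst hV
    have : Pr z ∅ (fun F => 2 * R F - (F.card : ℝ)) = 2 * R ∅ - 0 := by
      simp [Pr, wgt]
    rw [this, hR.empty]
    linarith
  | succ n IH =>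
    intro V hV R hR c hc hpol
    have hne : V.Nonempty := by
      rw [← Finset.card_pos, hV]; omega
    obtain ⟨f, hfV⟩ := hne
    set W := V.erase f with hW
    have hWcard : W.card = n := by
      rw [hW, Finset.card_erase_of_mem hfV, hV]
      omega
    have hfW : f ∉ W := Finset.notMem_erase f V
    have hzf2c : 2 * z f ≤ R {f} + c := by
      have := hpol {f} (Finset.singleton_subset_iff.mpr hfV)
      simpa using this
    rw [Pr_pivot hfV (fun F => 2 * R F - (F.card : ℝ))]
    rcases hR.singleton_dich f with hloop | hnonloop
    · -- loop case
      have hzfc : 2 * z f ≤ c := by rw [hloop] at hzf2c; linarith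
      have hval : Pr z W (fun X => 2 * R (insert f X) - ((insert f X).card : ℝ))
          = Pr z W (fun X => 2 * R X - (X.card : ℝ)) - 1 := by
        rw [← Pr_const z W 1, ← Pr_sub]
        apply Pr_congr
        intro X hX
        have hfX : f ∉ X := fun h => hfW (hX h)
        rw [hR.loop_insert hloop hfX, Finset.card_insert_of_notMem hfX]
        push_cast
        ring
      have hpol' : ∀ S ⊆ W, 2 * ∑ a ∈ S, z a ≤ R S + (c - 2 * z f) := by
        intro S hS
        have hfS : f ∉ S := fun h => hfW (hS h)
        have hiS : insert f S ⊆ V := by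
          apply Finset.insert_subset hfV
          exact hS.trans (Finset.erase_subset f V)
        have := hpol (insert f S) hiS
        rw [Finset.sum_insert hfS, hR.loop_insert hloop hfS] at this
        linarith
      have hIH := IH W hWcard R hR (c - 2 * z f) (by linarith) hpol'
      have hzf0 := (hz f).1
      rw [hval]
      nlinarith [hIH]
    · -- nonloop case
      set R' : Finset α → ℝ := fun S => R (insert f S) - 1 with hR'def
      have hR' : RkAx R' := hR.contract hnonloop
      have hval : Pr z W (fun X => 2 * R (insert f X) - ((insert f X).card : ℝ))
          = Pr z W (fun X => 2 * R' X - (X.card : ℝ)) + 1 := by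
        rw [← Pr_const z W 1, ← Pr_add]
        apply Pr_congr
        intro X hX
        have hfX : f ∉ X := fun h => hfW (hX h)
        rw [Finset.card_insert_of_notMem hfX]
        simp only [hR'def]
        push_cast
        ring
      have hpol'in : ∀ S ⊆ W, 2 * ∑ a ∈ S, z a ≤ R' S + (c + 1 - 2 * z f) := by
        intro S hS
        have hfS : f ∉ S := fun h => hfW (hS h)
        have hiS : insert f S ⊆ V := by
          apply Finset.insert_subset hfV
          exact hS.trans (Finset.erase_subset f V)
        have := hpol (insert f S) hiS
        rw [Finset.sum_insert hfS] at this
        simp only [hR'def]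
        linarith
      have hpol'out : ∀ S ⊆ W, 2 * ∑ a ∈ S, z a ≤ R S + c := by
        intro S hS
        exact hpol S (hS.trans (Finset.erase_subset f V))
      have hcin : (0:ℝ) ≤ c + 1 - 2 * z f := by
        rw [hnonloop] at hzf2c; linarith
      have hIHin := IH W hWcard R' hR' (c + 1 - 2 * z f) hcin hpol'in
      have hIHout := IH W hWcard R hR c hc hpol'out
      have hzf0 := (hz f).1
      have hzf1 := (hz f).2
      rw [hval]
      nlinarith [hIHin, hIHout]
end AGG

section Main
variable {α : Type*} [Fintype α] (N : Matroid α)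

lemma rkax_mrank : RkAx (fun S : Finset α => (mrank N ↑S : ℝ)) := by
  constructor
  · exact_mod_cast mrank_empty (N := N)
  · intro S T hST
    exact_mod_cast mrank_mono (N := N) hST
  · intro S T
    exact_mod_cast mrank_submod (N := N) S T
  · intro a S
    rcases mrank_insert_dichotomy (N := N) a S with h | h
    · left; exact_mod_cast h
    · right; exact_mod_cast h

lemma Pr_card (z : α → ℝ) (V : Finset α) :
    Pr z V (fun F => (F.card : ℝ)) = ∑ a ∈ V, z a := by
  induction V using Finset.induction_on with
  | empty => simp [Pr, wgt]
  | @insert a W ha IH =>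
    rw [Pr_insert ha]
    have h1 : Pr z W (fun X => (((insert a X).card : ℕ) : ℝ))
        = Pr z W (fun X => (X.card : ℝ) + 1) := by
      apply Pr_congr
      intro X hX
      have haX : a ∉ X := fun h => ha (hX h)
      rw [Finset.card_insert_of_notMem haX]
      push_cast
      ring
    rw [h1, Pr_add, Pr_const, IH, Finset.sum_insert ha]
    ring

lemma predF_insert_self (f : α) (X : Finset α) : predF (insert f X) f = predF X f := by
  unfold predF
  rw [Finset.filter_insert, if_neg (by omega)]

/-- probability that `f` is spanned by the earlier part of the sample -/
noncomputable def qf (z : α → ℝ) (V : Finset α) (f : α) : ℝ :=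
  Pr z V (fun F => if Sp N (predF F f) f then (1:ℝ) else 0)

lemma qf_pivot (z : α → ℝ) (V : Finset α) (f : α) (hf : f ∈ V) :
    qf N z V f = qf N z (V.erase f) f := by
  unfold qf
  rw [Pr_pivot hf]
  have h1 : Pr z (V.erase f) (fun X => if Sp N (predF (insert f X) f) f then (1:ℝ) else 0)
      = qf N z (V.erase f) f := by
    apply Pr_congr
    intro X _
    rw [predF_insert_self]
  rw [h1]
  unfold qf
  ring

lemma Pr_mem_and_sp (z : α → ℝ) (V : Finset α) (f : α) (hf : f ∈ V) :
    Pr z V (fun F => if f ∈ F ∧ Sp N (predF F f) f then (1:ℝ) else 0)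
      = z f * qf N z V f := by
  rw [Pr_pivot hf]
  have h1 : Pr z (V.erase f)
      (fun X => if f ∈ insert f X ∧ Sp N (predF (insert f X) f) f then (1:ℝ) else 0)
      = qf N z (V.erase f) f := by
    apply Pr_congr
    intro X _
    rw [predF_insert_self]
    simp only [Finset.mem_insert_self, true_and]
  have h2 : Pr z (V.erase f)
      (fun X => if f ∈ X ∧ Sp N (predF X f) f then (1:ℝ) else 0) = 0 := by
    have h3 : Pr z (V.erase f)
        (fun X => if f ∈ X ∧ Sp N (predF X f) f then (1:ℝ) else 0)
        = Pr z (V.erase f) (fun _ => (0:ℝ)) := by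
      apply Pr_congr
      intro X hX
      have hfX : f ∉ X := fun h => (Finset.notMem_erase f V) (hX h)
      rw [if_neg (fun hc => hfX hc.1)]
    rw [h3, Pr_const]
  rw [h1, h2, qf_pivot N z V f hf]
  ring

lemma card_sub_rank_eq (V F : Finset α) (hFV : F ⊆ V) :
    (F.card : ℝ) - (mrank N ↑F : ℝ)
      = ∑ f ∈ V, (if f ∈ F ∧ Sp N (predF F f) f then (1:ℝ) else 0) := by
  have hfilter : V.filter (fun f => f ∈ F ∧ Sp N (predF F f) f)
      = F.filter (fun f => Sp N (predF F f) f) := by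
    ext x
    simp only [Finset.mem_filter]
    constructor
    · rintro ⟨-, hxF, hsp⟩
      exact ⟨hxF, hsp⟩
    · rintro ⟨hxF, hsp⟩
      exact ⟨hFV hxF, hxF, hsp⟩
  have hsd : F \ gB N F = F.filter (fun f => Sp N (predF F f) f) := by
    ext x
    simp only [Finset.mem_sdiff, Finset.mem_filter]
    constructor
    · rintro ⟨hxF, hxB⟩
      refine ⟨hxF, ?_⟩
      by_contra hsp
      exact hxB ((mem_gB_iff' N F x hxF).mpr hsp)
    · rintro ⟨hxF, hsp⟩
      exact ⟨hxF, fun hB => ((mem_gB_iff' N F x hxF).mp hB) hsp⟩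
  have hcard : (F \ gB N F).card = F.card - (gB N F).card :=
    Finset.card_sdiff_of_subset (gB_subset N F)
  have hle : (gB N F).card ≤ F.card := Finset.card_le_card (gB_subset N F)
  rw [Finset.sum_boole, hfilter, ← hsd, hcard]
  rw [← gB_card_eq_rank N F]
  push_cast [Nat.cast_sub hle]
  ring

lemma sum_zq_le (z : α → ℝ) (hz : ∀ e, 0 ≤ z e ∧ z e ≤ 1) (V : Finset α)
    (hpol : ∀ S ⊆ V, 2 * ∑ a ∈ S, z a ≤ (mrank N ↑S : ℝ)) :
    ∑ f ∈ V, z f * qf N z V f ≤ (1/2) * ∑ a ∈ V, z a := by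
  have hAGG := AGG z hz V.card V rfl (fun S => (mrank N ↑S : ℝ)) (rkax_mrank N)
    0 le_rfl (fun S hS => by simpa using hpol S hS)
  have hsplit : Pr z V (fun F => 2 * (mrank N ↑F : ℝ) - (F.card : ℝ))
      = 2 * Pr z V (fun F => (mrank N ↑F : ℝ)) - Pr z V (fun F => (F.card : ℝ)) := by
    rw [← Pr_smul, ← Pr_sub]
  have hdiff : Pr z V (fun F => (F.card : ℝ) - (mrank N ↑F : ℝ))
      = ∑ f ∈ V, z f * qf N z V f := by
    have h1 : Pr z V (fun F => (F.card : ℝ) - (mrank N ↑F : ℝ))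
        = Pr z V (fun F => ∑ f ∈ V, (if f ∈ F ∧ Sp N (predF F f) f then (1:ℝ) else 0)) := by
      apply Pr_congr
      intro F hF
      exact card_sub_rank_eq N V F hF
    rw [h1, Pr_sum]
    apply Finset.sum_congr rfl
    intro f hf
    exact Pr_mem_and_sp N z V f hf
  have hsub2 : Pr z V (fun F => (F.card : ℝ) - (mrank N ↑F : ℝ))
      = Pr z V (fun F => (F.card : ℝ)) - Pr z V (fun F => (mrank N ↑F : ℝ)) := by
    rw [← Pr_sub]
  rw [hsplit] at hAGG
  rw [hsub2] at hdiff
  rw [← hdiff]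
  rw [Pr_card] at hAGG ⊢
  linarith

end Main

section Cover
variable {α : Type*} [Fintype α] (N : Matroid α)

noncomputable def badInd (t : ℕ) (F : Finset α) : ℝ :=
  if ∃ I : Fin t → Set α, (∀ j, N.Indep (I j)) ∧ ↑F ⊆ ⋃ j, I j then (0 : ℝ) else 1

lemma badInd_zero_le (F : Finset α) : badInd N 0 F ≤ (F.card : ℝ) := by
  unfold badInd
  rcases F.eq_empty_or_nonempty with rfl | hne
  · rw [if_pos]
    · simp
    · exact ⟨fun j => j.elim0, fun j => j.elim0, by simp⟩
  · split
    · positivity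
    · have : 1 ≤ F.card := Finset.card_pos.mpr hne
      exact_mod_cast this

lemma badInd_succ_le (t : ℕ) (F : Finset α) :
    badInd N (t+1) F ≤ badInd N t (F \ gB N F) := by
  unfold badInd
  by_cases h : ∃ I : Fin t → Set α, (∀ j, N.Indep (I j)) ∧ ↑(F \ gB N F) ⊆ ⋃ j, I j
  · obtain ⟨I, hI, hcov⟩ := h
    have hex : ∃ I' : Fin (t+1) → Set α, (∀ j, N.Indep (I' j)) ∧ ↑F ⊆ ⋃ j, I' j := by
      refine ⟨Fin.cons (α := fun _ => Set α) (↑(gB N F) : Set α) I, ?_, ?_⟩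
      · intro j
        refine Fin.cases ?_ ?_ j
        · exact gB_indep N F
        · intro i
          simpa using hI i
      · intro x hx
        by_cases hxB : x ∈ gB N F
        · exact Set.mem_iUnion.mpr ⟨0, by simpa using hxB⟩
        · have hxF : x ∈ (F : Set α) := hx
          have : x ∈ (↑(F \ gB N F) : Set α) := by
            simp only [Finset.coe_sdiff, Set.mem_diff]
            exact ⟨hxF, by simpa using hxB⟩
          obtain ⟨j, hj⟩ := Set.mem_iUnion.mp (hcov this)
          exact Set.mem_iUnion.mpr ⟨j.succ, by simpa using hj⟩
    rw [if_pos hex, if_pos ⟨I, hI, hcov⟩]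
  · rw [if_neg h]
    split
    · exact zero_le_one
    · exact le_rfl

lemma badInd_nonneg (t : ℕ) (F : Finset α) : 0 ≤ badInd N t F := by
  unfold badInd; split
  · exact le_rfl
  · exact zero_le_one

lemma cB_nonneg (z : α → ℝ) (hz : ∀ e, 0 ≤ z e ∧ z e ≤ 1) (V B : Finset α) :
    0 ≤ cB N z V B := by
  apply mul_nonneg
  · exact Finset.prod_nonneg fun a _ => (hz a).1
  · exact Finset.prod_nonneg fun a _ => by linarith [(hz a).2]

theorem mainThm (z : α → ℝ) (hz : ∀ e, 0 ≤ z e ∧ z e ≤ 1) (t : ℕ) :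
    ∀ V : Finset α, (∀ S ⊆ V, 2 * ∑ a ∈ S, z a ≤ (mrank N ↑S : ℝ)) →
    Pr z V (badInd N t) ≤ (1/2)^t * ∑ a ∈ V, z a := by
  induction t with
  | zero =>
    intro V hpol
    have h1 : Pr z V (badInd N 0) ≤ Pr z V (fun F => (F.card : ℝ)) :=
      Pr_mono hz (fun F _ => badInd_zero_le N F)
    rw [Pr_card] at h1
    simpa using h1
  | succ t IH =>
    intro V hpol
    have step1 : Pr z V (badInd N (t+1)) ≤ Pr z V (fun F => badInd N t (F \ gB N F)) :=
      Pr_mono hz (fun F _ => badInd_succ_le N t F)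
    have step2 : ∑ B ∈ V.powerset,
        (if Good N B then cB N z V B * Pr z (VBs N V B) (fun X => badInd N t ((B ∪ X) \ gB N (B ∪ X))) else 0)
        ≤ ∑ B ∈ V.powerset,
        (if Good N B then cB N z V B * Pr z (VBs N V B) (fun X => (∑ a ∈ VBs N V (gB N (B ∪ X)), z a) * (1/2)^t) else 0) := by
      apply Finset.sum_le_sum
      intro B hB
      rw [Finset.mem_powerset] at hB
      by_cases hGood : Good N B
      · rw [if_pos hGood, if_pos hGood]
        apply mul_le_mul_of_nonneg_left ?_ (cB_nonneg N z hz V B)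
        have hinner : Pr z (VBs N V B) (fun X => badInd N t ((B ∪ X) \ gB N (B ∪ X)))
            = Pr z (VBs N V B) (badInd N t) := by
          apply Pr_congr
          intro X hX
          have hgb : gB N (B ∪ X) = B :=
            gB_union_eq N B X hGood (fun a ha => mem_VBs_prop N (hX ha))
          rw [hgb, Finset.union_sdiff_cancel_left
            ((disjoint_B_VBs N V B).mono_right hX)]
        have hinner2 : Pr z (VBs N V B) (fun X => (∑ a ∈ VBs N V (gB N (B ∪ X)), z a) * (1/2)^t)
            = (∑ a ∈ VBs N V B, z a) * (1/2)^t := by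
          have : Pr z (VBs N V B) (fun X => (∑ a ∈ VBs N V (gB N (B ∪ X)), z a) * (1/2)^t)
              = Pr z (VBs N V B) (fun _ => (∑ a ∈ VBs N V B, z a) * (1/2)^t) := by
            apply Pr_congr
            intro X hX
            rw [gB_union_eq N B X hGood (fun a ha => mem_VBs_prop N (hX ha))]
          rw [this, Pr_const]
        rw [hinner, hinner2]
        have hIH := IH (VBs N V B) (fun S hS => hpol S (hS.trans (VBs_subset N V B)))
        linarith
      · rw [if_neg hGood, if_neg hGood]
    have step3 : ∑ B ∈ V.powerset,
        (if Good N B then cB N z V B * Pr z (VBs N V B) (fun X => (∑ a ∈ VBs N V (gB N (B ∪ X)), z a) * (1/2)^t) else 0)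
        = Pr z V (fun F => (∑ a ∈ VBs N V (gB N F), z a) * (1/2)^t) :=
      (Pr_fiber N z V (fun F => (∑ a ∈ VBs N V (gB N F), z a) * (1/2)^t)).symm
    have step4 : Pr z V (fun F => (∑ a ∈ VBs N V (gB N F), z a) * (1/2)^t)
        = (1/2)^t * ∑ f ∈ V, z f * qf N z V f := by
      have hpt : ∀ F ⊆ V, (∑ a ∈ VBs N V (gB N F), z a) * (1/2)^t
          = (1/2)^t * ∑ f ∈ V, z f * (if Sp N (predF F f) f then (1:ℝ) else 0) := by
        intro F hF
        have hVB : VBs N V (gB N F) ⊆ V := VBs_subset N V (gB N F)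
        have : ∑ a ∈ VBs N V (gB N F), z a
            = ∑ f ∈ V, (if f ∈ VBs N V (gB N F) then z f else 0) := by
          rw [Finset.sum_ite_mem, Finset.inter_eq_right.mpr hVB]
        rw [this]
        have : ∀ f ∈ V, (if f ∈ VBs N V (gB N F) then z f else 0)
            = z f * (if Sp N (predF F f) f then (1:ℝ) else 0) := by
          intro f hf
          have hiff := mem_VBs_iff_sp N V F hF f hf
          by_cases hsp : Sp N (predF F f) f
          · rw [if_pos (hiff.mpr hsp), if_pos hsp]
            ring
          · rw [if_neg (fun hc => hsp (hiff.mp hc)), if_neg hsp]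
            ring
        rw [Finset.sum_congr rfl this]
        ring
      have h5 : Pr z V (fun F => (∑ a ∈ VBs N V (gB N F), z a) * (1/2)^t)
          = Pr z V (fun F => (1/2)^t * ∑ f ∈ V, z f * (if Sp N (predF F f) f then (1:ℝ) else 0)) :=
        Pr_congr hpt
      rw [h5, Pr_smul]
      congr 1
      have h6 : Pr z V (fun F => ∑ f ∈ V, z f * (if Sp N (predF F f) f then (1:ℝ) else 0))
          = ∑ f ∈ V, Pr z V (fun F => z f * (if Sp N (predF F f) f then (1:ℝ) else 0)) :=
        Pr_sum z V V _
      rw [h6]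
      apply Finset.sum_congr rfl
      intro f _
      rw [Pr_smul]
      rfl
    have step5 : ∑ f ∈ V, z f * qf N z V f ≤ (1/2) * ∑ a ∈ V, z a :=
      sum_zq_le N z hz V hpol
    calc Pr z V (badInd N (t+1))
        ≤ Pr z V (fun F => badInd N t (F \ gB N F)) := step1
      _ = ∑ B ∈ V.powerset,
          (if Good N B then cB N z V B * Pr z (VBs N V B) (fun X => badInd N t ((B ∪ X) \ gB N (B ∪ X))) else 0) :=
          Pr_fiber N z V (fun F => badInd N t (F \ gB N F))
      _ ≤ _ := step2
      _ = (1/2)^t * ∑ f ∈ V, z f * qf N z V f := by rw [step3, step4]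
      _ ≤ (1/2)^t * ((1/2) * ∑ a ∈ V, z a) := by
          apply mul_le_mul_of_nonneg_left step5 (by positivity)
      _ = (1/2)^(t+1) * ∑ a ∈ V, z a := by ring

end Cover

theorem random_subset_covered_by_few_independent_sets
    {α : Type*} [Fintype α] (N : Matroid α) (hE : N.E = Set.univ)
    (z : α → ℝ) (hz : ∀ e, 0 ≤ z e ∧ z e ≤ 1)
    (hzP : ∀ S : Finset α, ∑ e ∈ S, z e ≤ (mrank N ↑S : ℝ) / 2)
    (t : ℕ) :
    ∑ F : Finset α, (∏ e ∈ F, z e) * (∏ e ∈ Fᶜ, (1 - z e)) *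
        (if ∃ I : Fin t → Set α, (∀ j, N.Indep (I j)) ∧ ↑F ⊆ ⋃ j, I j then (0 : ℝ) else 1)
      ≤ (Fintype.card α : ℝ) / 2 ^ t := by
  have hpol : ∀ S ⊆ (Finset.univ : Finset α), 2 * ∑ a ∈ S, z a ≤ (mrank N ↑S : ℝ) := by
    intro S _
    have := hzP S
    linarith
  have hmain := mainThm N z hz t Finset.univ hpol
  have heq : Pr z Finset.univ (badInd N t)
      = ∑ F : Finset α, (∏ e ∈ F, z e) * (∏ e ∈ Fᶜ, (1 - z e)) *
        (if ∃ I : Fin t → Set α, (∀ j, N.Indep (I j)) ∧ ↑F ⊆ ⋃ j, I j then (0 : ℝ) else 1) := by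
    unfold Pr wgt badInd
    rw [Finset.powerset_univ]
    apply Finset.sum_congr rfl
    intro F _
    rw [Finset.compl_eq_univ_sdiff]
  have hsum : ∑ a ∈ (Finset.univ : Finset α), z a ≤ (Fintype.card α : ℝ) := by
    calc ∑ a ∈ (Finset.univ : Finset α), z a
        ≤ ∑ a ∈ (Finset.univ : Finset α), (1:ℝ) :=
          Finset.sum_le_sum (fun a _ => (hz a).2)
      _ = (Fintype.card α : ℝ) := by simp
  rw [← heq]
  calc Pr z Finset.univ (badInd N t)
      ≤ (1/2)^t * ∑ a ∈ (Finset.univ : Finset α), z a := hmain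
    _ ≤ (1/2)^t * (Fintype.card α : ℝ) := by
        apply mul_le_mul_of_nonneg_left hsum (by positivity)
    _ = (Fintype.card α : ℝ) / 2 ^ t := by
        rw [div_pow]
        ring
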